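/- There exists a constant C₁ > 0 with the following property: for every α with 0 < α ≤ π and α ≠ 2π/3, and every sequence (ε_n) of positive reals with ε_n ≥ C₁·(log n)/n for all sufficiently large n and ε_n → 0, if X_1, …, X_n are drawn independently from the uniform probability measure on the circle S¹, then the probability that the random ε_n-distance graph on {X_1, …, X_n} with parameter α has chromatic number exactly 3 tends to 1 as n → ∞. -/

import Mathlib

/-- The circle `S¹ = ℝ/2πℤ` with its quotient metric. -/
abbrev Circle2 : Type := AddCircle (2 * Real.pi)

instance : Fact (0 < 2 * Real.pi) := ⟨by positivity⟩

/-- `X` is an `r`-net of the circle. -/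
def cIsNet (r : ℝ) (X : Set Circle2) : Prop :=
  ∀ y : Circle2, ∃ x ∈ X, dist x y ≤ r

/-- The ε-distance graph with parameter α on a set `X ⊆ S¹`: distinct points are
adjacent iff their distance lies in `[α - ε, α + ε]`. -/
def cDistGraph (X : Set Circle2) (α ε : ℝ) : SimpleGraph X where
  Adj x y := x ≠ y ∧ α - ε ≤ dist x.1 y.1 ∧ dist x.1 y.1 ≤ α + ε
  symm := by
    constructor
    intro x y h
    exact ⟨h.1.symm, by rw [dist_comm]; exact h.2.1, by rw [dist_comm]; exact h.2.2⟩
  loopless := ⟨fun x h => h.1 rfl⟩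

/-- The ε-distance graph with parameter α on the whole circle `S¹`. -/
def cDistGraphAll (α ε : ℝ) : SimpleGraph Circle2 where
  Adj x y := x ≠ y ∧ α - ε ≤ dist x y ∧ dist x y ≤ α + ε
  symm := by
    constructor
    intro x y h
    exact ⟨h.1.symm, by rw [dist_comm]; exact h.2.1, by rw [dist_comm]; exact h.2.2⟩
  loopless := ⟨fun x h => h.1 rfl⟩

open MeasureTheory

/-- The uniform (Haar) probability measure on the circle `ℝ/2πℤ`. -/
noncomputable def circleUniform : Measure Circle2 :=
  (ENNReal.ofReal (2 * Real.pi))⁻¹ • (volume : Measure Circle2)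


open Real Filter
open scoped ENNReal

lemma coe_circle_sub_period (t : ℝ) : ((t - 2 * π : ℝ) : Circle2) = ((t : ℝ) : Circle2) := by
  have h := AddCircle.coe_period (p := 2 * π)
  rw [AddCircle.coe_sub, h, sub_zero]

lemma norm_circle_eq {t : ℝ} (h0 : 0 ≤ t) (h2 : t ≤ 2 * π) :
    ‖(t : Circle2)‖ = min t (2 * π - t) := by
  rcases le_total t π with h | h
  · rw [min_eq_left (by linarith)]
    have : |t| ≤ |2 * π| / 2 := by
      rw [abs_of_nonneg h0, abs_of_nonneg (by positivity)]; linarith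
    rw [(AddCircle.norm_coe_eq_abs_iff (2 * π) (by positivity)).mpr this, abs_of_nonneg h0]
  · rw [min_eq_right (by linarith)]
    have : |t - 2 * π| ≤ |2 * π| / 2 := by
      rw [abs_of_nonpos (by linarith), abs_of_nonneg (by positivity)]; linarith [pi_pos]
    rw [← coe_circle_sub_period t,
      (AddCircle.norm_coe_eq_abs_iff (2 * π) (by positivity)).mpr this,
      abs_of_nonpos (by linarith)]
    ring

lemma abs_norm_circle_sub_le {α t : ℝ} (hα0 : 0 < α) (hαπ : α ≤ π) (h0 : 0 ≤ t)
    (h2 : t ≤ 2 * π) : |‖(t : Circle2)‖ - α| ≤ |t - α| := by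
  rw [norm_circle_eq h0 h2]
  rcases le_total t (2 * π - t) with h | h
  · rw [min_eq_left h]
  · rw [min_eq_right h]
    have h1 : |t - α| = t - α := abs_of_nonneg (by linarith)
    rw [h1, abs_le]
    constructor <;> linarith


namespace SG18

def mkWalk {V : Type*} (G : SimpleGraph V) (f : ℕ → V) :
    ∀ k : ℕ, (∀ i, i < k → G.Adj (f i) (f (i + 1))) → G.Walk (f 0) (f k)
  | 0, _ => SimpleGraph.Walk.nil
  | (k + 1), h =>
    (mkWalk G f k (fun i hi => h i (Nat.lt_succ_of_lt hi))).concat (h k (Nat.lt_succ_self k))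

lemma mkWalk_length {V : Type*} (G : SimpleGraph V) (f : ℕ → V) (k : ℕ)
    (h : ∀ i, i < k → G.Adj (f i) (f (i + 1))) : (mkWalk G f k h).length = k := by
  induction k with
  | zero => rfl
  | succ k ih =>
    rw [mkWalk, SimpleGraph.Walk.length_concat, ih]

lemma lower_bound {n : ℕ} {α ε δ : ℝ} {k : ℕ} {m : ℤ}
    (hα0 : 0 < α) (hαπ : α ≤ π) (hε0 : 0 < ε) (hεα : ε < α) (hδ0 : 0 ≤ δ)
    (hkodd : Odd k) (hk0 : 0 < k)
    (happrox : |2 * π * m - k * α| ≤ k * (ε - 2 * δ))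
    (x : Fin n → Circle2) (hnet : cIsNet δ (Set.range x)) :
    3 ≤ (cDistGraph (Set.range x) α ε).chromaticNumber := by
  have hkR : (0 : ℝ) < k := by exact_mod_cast hk0
  set η : ℝ := (2 * π * m - k * α) / k with hηdef
  have hη : |η| ≤ ε - 2 * δ := by
    rw [hηdef, abs_div, abs_of_pos hkR, div_le_iff₀ hkR]
    linarith [happrox]
  have hηabs := abs_le.mp hη
  set t : ℝ := α + η with htdef
  have ht0 : 0 ≤ t := by linarith
  have ht2 : t ≤ 2 * π := by linarith
  have hnt : |‖(t : Circle2)‖ - α| ≤ |η| := by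
    have := abs_norm_circle_sub_le hα0 hαπ ht0 ht2
    simpa [htdef] using this
  have hntabs := abs_le.mp hnt
  set p : ℕ → Circle2 := fun i => ((i * t : ℝ) : Circle2) with hpdef
  have hp0 : p 0 = 0 := by simp [hpdef]
  have hpk : p k = p 0 := by
    have hkt : (k : ℝ) * t = 2 * π * m := by
      rw [htdef, hηdef]; field_simp; ring
    rw [hp0, hpdef]
    simp only [hkt]
    rw [AddCircle.coe_eq_zero_iff]
    exact ⟨m, by push_cast [zsmul_eq_mul]; ring⟩
  choose g hg1 hg2 using fun i => hnet (p i)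
  set G := cDistGraph (Set.range x) α ε with hGdef
  set w : ℕ → (Set.range x : Set Circle2) := fun i => ⟨g (i % k), hg1 (i % k)⟩ with hwdef
  have hadj : ∀ i, i < k → G.Adj (w i) (w (i + 1)) := by
    intro i hi
    have hik : i % k = i := Nat.mod_eq_of_lt hi
    have hstep : dist (p (i % k)) (p ((i + 1) % k)) = ‖(t : Circle2)‖ := by
      have h1 : p ((i + 1) % k) = p (i + 1) := by
        rcases Nat.lt_or_ge (i + 1) k with h | h
        · rw [Nat.mod_eq_of_lt h]
        · have hk1 : i + 1 = k := by omega
          rw [hk1, Nat.mod_self]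
          exact hpk.symm
      rw [hik, h1, dist_eq_norm]
      have : p i - p (i + 1) = ((-t : ℝ) : Circle2) := by
        rw [hpdef]
        simp only []
        rw [← AddCircle.coe_sub]
        congr 1
        push_cast
        ring
      rw [this, AddCircle.coe_neg, norm_neg]
    have hd1 : dist (g (i % k)) (g ((i + 1) % k)) ≤ α + ε := by
      calc dist (g (i % k)) (g ((i + 1) % k))
          ≤ dist (g (i % k)) (p (i % k)) + dist (p (i % k)) (p ((i + 1) % k))
            + dist (p ((i + 1) % k)) (g ((i + 1) % k)) := dist_triangle4 _ _ _ _
        _ ≤ δ + ‖(t : Circle2)‖ + δ := by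
            refine add_le_add (add_le_add (hg2 _) (le_of_eq hstep)) ?_
            rw [dist_comm]; exact hg2 _
        _ ≤ α + ε := by linarith
    have hd2 : α - ε ≤ dist (g (i % k)) (g ((i + 1) % k)) := by
      have := dist_triangle4 (p (i % k)) (g (i % k)) (g ((i + 1) % k)) (p ((i + 1) % k))
      rw [dist_comm (p (i % k)) (g (i % k))] at this
      have h2 := hstep
      have := hg2 (i % k)
      have := hg2 ((i + 1) % k)
      nlinarith [hg2 (i % k), hg2 ((i + 1) % k), hstep,
        dist_triangle4 (p (i % k)) (g (i % k)) (g ((i + 1) % k)) (p ((i + 1) % k)),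
        dist_comm (g (i % k)) (p (i % k)), dist_comm (g ((i + 1) % k)) (p ((i + 1) % k))]
    refine (⟨?_, hd2, hd1⟩ : w i ≠ w (i + 1) ∧ α - ε ≤ dist (w i).1 (w (i + 1)).1 ∧ dist (w i).1 (w (i + 1)).1 ≤ α + ε)
    intro hcon
    have : g (i % k) = g ((i + 1) % k) := congrArg Subtype.val hcon
    rw [this, dist_self] at hd2
    linarith
  have hwk : w k = w 0 := by simp [hwdef, Nat.mod_self]
  refine SimpleGraph.Walk.three_le_chromaticNumber_of_odd_loop
    ((mkWalk G w k hadj).copy rfl hwk) ?_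
  rw [SimpleGraph.Walk.length_copy, mkWalk_length]
  exact hkodd

noncomputable def crep : Circle2 → ℝ := fun z => (AddCircle.eq_coe_Ico z).choose

lemma crep_mem (z : Circle2) : crep z ∈ Set.Ico (0:ℝ) (2 * π) :=
  (AddCircle.eq_coe_Ico z).choose_spec.1

lemma crep_eq (z : Circle2) : ((crep z : ℝ) : Circle2) = z :=
  (AddCircle.eq_coe_Ico z).choose_spec.2

/-- The key arithmetic fact for the 3-coloring. -/
lemma color_key {α ε : ℝ} {s r : ℕ} (hs : 0 < s) (hε : 0 ≤ ε)
    (hband : |α - (2 * r + 1) * π / s| + ε ≤ π / (3 * s))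
    {u v : ℝ} (hu : u ∈ Set.Ico (0:ℝ) (2 * π)) (hv : v ∈ Set.Ico (0:ℝ) (2 * π))
    (hvu : v ≤ u)
    (hcol : (3:ℤ) ∣ ⌊u / (2 * π / (3 * s))⌋ - ⌊v / (2 * π / (3 * s))⌋)
    (hd1 : α - ε ≤ ‖((u - v : ℝ) : Circle2)‖) (hd2 : ‖((u - v : ℝ) : Circle2)‖ ≤ α + ε) :
    False := by
  have hsR : (0:ℝ) < s := by exact_mod_cast hs
  set ℓ : ℝ := 2 * π / (3 * s) with hℓdef
  have hℓ0 : 0 < ℓ := by positivity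
  -- band inclusion
  have hπs : π / s = 3 * ℓ / 2 := by rw [hℓdef]; field_simp
  have hπ3s : π / (3 * s) = ℓ / 2 := by rw [hℓdef]; ring
  have hbandabs := abs_le.mp (by linarith [hband] : |α - (2 * r + 1) * π / s| ≤ π / (3 * s) - ε)
  have hb1 : ((3 * r + 1 : ℕ) : ℝ) * ℓ ≤ α - ε := by
    have : (2 * r + 1) * π / s = (2 * (r:ℝ) + 1) * (π / s) := by ring
    push_cast
    rw [this, hπs] at hbandabs
    rw [hπ3s] at hbandabs
    nlinarith [hbandabs.1, hbandabs.2]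
  have hb2 : α + ε ≤ ((3 * r + 2 : ℕ) : ℝ) * ℓ := by
    have : (2 * r + 1) * π / s = (2 * (r:ℝ) + 1) * (π / s) := by ring
    push_cast
    rw [this, hπs] at hbandabs
    rw [hπ3s] at hbandabs
    nlinarith [hbandabs.1, hbandabs.2]
  -- the norm
  have huv0 : 0 ≤ u - v := by linarith
  have huv2 : u - v ≤ 2 * π := by
    rcases hu with ⟨hu0, hu2⟩; rcases hv with ⟨hv0, hv2⟩; linarith
  rw [norm_circle_eq huv0 huv2] at hd1 hd2
  -- floor bounds
  set D : ℤ := ⌊u / ℓ⌋ - ⌊v / ℓ⌋ with hDdef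
  have hfloor_u1 : (⌊u / ℓ⌋ : ℝ) * ℓ ≤ u := (le_div_iff₀ hℓ0).mp (Int.floor_le (u / ℓ))
  have hfloor_u2 : u < ((⌊u / ℓ⌋ : ℝ) + 1) * ℓ :=
    (div_lt_iff₀ hℓ0).mp (Int.lt_floor_add_one (u / ℓ))
  have hfloor_v1 : (⌊v / ℓ⌋ : ℝ) * ℓ ≤ v := (le_div_iff₀ hℓ0).mp (Int.floor_le (v / ℓ))
  have hfloor_v2 : v < ((⌊v / ℓ⌋ : ℝ) + 1) * ℓ :=
    (div_lt_iff₀ hℓ0).mp (Int.lt_floor_add_one (v / ℓ))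
  have hD1 : ((D:ℝ) - 1) * ℓ < u - v := by
    push_cast [hDdef]
    nlinarith
  have hD2 : u - v < ((D:ℝ) + 1) * ℓ := by
    push_cast [hDdef]
    nlinarith
  have h2π : 2 * π = ((3 * s : ℕ) : ℝ) * ℓ := by
    push_cast
    rw [hℓdef]
    field_simp
  -- in either case, the distance lies in ((E-1)ℓ, (E+1)ℓ) for some E ≡ 0 mod 3
  have hmain : ∀ E : ℤ, (3:ℤ) ∣ E → ((E:ℝ) - 1) * ℓ < min (u - v) (2 * π - (u - v)) →
      min (u - v) (2 * π - (u - v)) < ((E:ℝ) + 1) * ℓ → False := by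
    intro E hEdvd hE1 hE2
    have hl1 : ((3 * r + 1 : ℕ) : ℝ) * ℓ < ((E:ℝ) + 1) * ℓ := lt_of_le_of_lt (by linarith [hd1]) hE2
    have hl2 : ((E:ℝ) - 1) * ℓ < ((3 * r + 2 : ℕ) : ℝ) * ℓ := lt_of_lt_of_le hE1 (by linarith [hd2])
    have hi1 : ((3 * r + 1 : ℕ) : ℤ) < E + 1 := by
      have := lt_of_mul_lt_mul_right hl1 hℓ0.le
      exact_mod_cast this
    have hi2 : E - 1 < ((3 * r + 2 : ℕ) : ℤ) := by
      have := lt_of_mul_lt_mul_right hl2 hℓ0.le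
      exact_mod_cast this
    omega
  rcases le_total (u - v) (2 * π - (u - v)) with hc | hc
  · refine hmain D hcol ?_ ?_
    · rw [min_eq_left hc]; exact hD1
    · rw [min_eq_left hc]; exact hD2
  · refine hmain ((3 * s : ℕ) - D) (by omega) ?_ ?_
    · rw [min_eq_right hc]
      push_cast
      rw [h2π]
      push_cast
      linarith [hD2]
    · rw [min_eq_right hc]
      push_cast
      rw [h2π]
      push_cast
      linarith [hD1]

lemma upper_bound {α ε : ℝ} {s r : ℕ} (hs : 0 < s) (hε : 0 ≤ ε)
    (hband : |α - (2 * r + 1) * π / s| + ε ≤ π / (3 * s))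
    (X : Set Circle2) : (cDistGraph X α ε).Colorable 3 := by
  have hcol : (cDistGraph X α ε).Colorable (Fintype.card (ZMod 3)) := by
    refine SimpleGraph.Coloring.colorable (SimpleGraph.Coloring.mk
      (fun z => ((⌊crep z.1 / (2 * π / (3 * s))⌋ : ℤ) : ZMod 3)) ?_)
    rintro a b (⟨hne, hdd1, hdd2⟩ : a ≠ b ∧ α - ε ≤ dist a.1 b.1 ∧ dist a.1 b.1 ≤ α + ε) hcc
    have hdvd : (3:ℤ) ∣ ⌊crep a.1 / (2 * π / (3 * s))⌋ - ⌊crep b.1 / (2 * π / (3 * s))⌋ := by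
      have := (ZMod.intCast_eq_intCast_iff' _ _ _).mp hcc
      omega
    have hdist : dist a.1 b.1 = ‖((crep a.1 - crep b.1 : ℝ) : Circle2)‖ := by
      rw [dist_eq_norm, AddCircle.coe_sub, crep_eq, crep_eq]
    rcases le_total (crep b.1) (crep a.1) with hvu | hvu
    · exact color_key hs hε hband (crep_mem a.1) (crep_mem b.1) hvu hdvd
        (by rw [← hdist]; exact hdd1) (by rw [← hdist]; exact hdd2)
    · have hsym : ‖((crep b.1 - crep a.1 : ℝ) : Circle2)‖
          = ‖((crep a.1 - crep b.1 : ℝ) : Circle2)‖ := by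
        rw [show crep b.1 - crep a.1 = -(crep a.1 - crep b.1) by ring, AddCircle.coe_neg, norm_neg]
      exact color_key hs hε hband (crep_mem b.1) (crep_mem a.1) hvu (by omega)
        (by rw [hsym, ← hdist]; exact hdd1) (by rw [hsym, ← hdist]; exact hdd2)
  simpa using hcol


lemma dense_helper {x : ℝ} (hirr : ∀ q : ℚ, x ≠ q * π) (c η : ℝ) (hη : 0 < η) :
    ∃ s t : ℤ, |s * x + 2 * π * t - c| < η := by
  have hdense : Dense ((AddSubgroup.closure {x, 2 * π} : AddSubgroup ℝ) : Set ℝ) := by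
    rcases AddSubgroup.dense_or_cyclic (AddSubgroup.closure {x, 2 * π}) with h | ⟨g, hg⟩
    · exact h
    · exfalso
      have hx : x ∈ AddSubgroup.closure ({x, 2 * π} : Set ℝ) :=
        AddSubgroup.subset_closure (Set.mem_insert _ _)
      have h2π : 2 * π ∈ AddSubgroup.closure ({x, 2 * π} : Set ℝ) :=
        AddSubgroup.subset_closure (Set.mem_insert_of_mem _ rfl)
      rw [hg, AddSubgroup.mem_closure_singleton] at hx h2π
      obtain ⟨u, hu⟩ := hx
      obtain ⟨v, hv⟩ := h2π
      have hv0 : (v : ℝ) ≠ 0 := by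
        intro h
        rw [zsmul_eq_mul, h, zero_mul] at hv
        have := pi_pos
        linarith
      refine hirr ((2 * u : ℚ) / (v : ℚ)) ?_
      rw [zsmul_eq_mul] at hu hv
      have hg' : g = 2 * π / v := by field_simp at hv ⊢; linarith [hv]
      rw [← hu, hg']
      push_cast
      field_simp
  obtain ⟨z, hz, hzo⟩ := hdense.exists_mem_open isOpen_Ioo
    (Set.nonempty_Ioo.mpr (by linarith : c - η < c + η))
  rw [SetLike.mem_coe, AddSubgroup.mem_closure_pair] at hz
  obtain ⟨s, t, hst⟩ := hz
  refine ⟨s, t, ?_⟩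
  rw [zsmul_eq_mul, zsmul_eq_mul] at hst
  rcases hzo with ⟨h1, h2⟩
  rw [abs_lt]
  constructor <;> nlinarith [hst]





lemma exists_odd_approx (α : ℝ) (hα0 : 0 < α) (hαπ : α ≤ π) {ζ : ℝ} (hζ : 0 < ζ) :
    ∃ (k : ℕ) (m : ℤ), Odd k ∧ 0 < k ∧ |2 * π * m - k * α| ≤ k * ζ := by
  have hπ := pi_pos
  by_cases hrat : ∃ q : ℚ, α = q * π
  · obtain ⟨q, rfl⟩ := hrat
    have hq0 : 0 < q := by
      by_contra h
      push_neg at h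
      have : (q : ℝ) ≤ 0 := by exact_mod_cast h
      nlinarith
    set a : ℤ := q.num with hadef
    set b : ℤ := (q.den : ℤ) with hbdef
    have ha0 : 0 < a := Rat.num_pos.mpr hq0
    have hb0 : (0:ℤ) < b := by rw [hbdef]; exact_mod_cast q.pos
    have hbR : (0:ℝ) < (b:ℝ) := by exact_mod_cast hb0
    have hcast : (q : ℝ) = (a : ℝ) / (b : ℝ) := by
      rw [Rat.cast_def, hadef, hbdef]
      norm_cast
    rcases Int.even_or_odd a with ha | ha
    · -- `a` even hence `b` odd; take `k = b`, exact relation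
      obtain ⟨a₀, ha₀⟩ := ha
      have hbodd : Odd b := by
        rcases Int.even_or_odd b with hb | hb
        · exfalso
          obtain ⟨b₀, hb₀⟩ := hb
          have h2 : (2 : ℕ) ∣ q.num.natAbs.gcd q.den := by
            refine Nat.dvd_gcd ?_ ?_
            · have h2a : (2:ℤ) ∣ q.num := ⟨a₀, by omega⟩
              simpa using Int.natAbs_dvd_natAbs.mpr h2a
            · have h2b : (2:ℤ) ∣ b := ⟨b₀, by omega⟩
              rw [hbdef] at h2b
              exact_mod_cast h2b
          rw [q.reduced] at h2
          omega
        · exact hb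
      have hbt : 0 < b.toNat := by omega
      refine ⟨b.toNat, a₀, ?_, hbt, ?_⟩
      · rcases hbodd with ⟨j, hj⟩
        exact ⟨j.toNat, by omega⟩
      · have hbk : ((b.toNat : ℕ) : ℝ) = (b : ℝ) := by
          exact_mod_cast Int.toNat_of_nonneg hb0.le
        rw [hbk]
        have haR : (a : ℝ) = (a₀ : ℝ) + (a₀ : ℝ) := by exact_mod_cast ha₀
        have hba : (b : ℝ) * (q : ℝ) = (a : ℝ) := by
          rw [hcast]; field_simp
        have hz : |2 * π * (a₀:ℝ) - (b : ℝ) * ((q:ℝ) * π)| = 0 := by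
          rw [abs_eq_zero]
          nlinarith [hba]
        rw [hz]
        positivity
    · -- `a` odd
      obtain ⟨c, hc⟩ := ha
      have hcop : IsCoprime a b := by
        rw [Int.isCoprime_iff_gcd_eq_one]
        exact_mod_cast q.reduced
      have hA2 : IsCoprime a 2 := ⟨1, -c, by rw [hc]; ring⟩
      obtain ⟨u, w, huw⟩ := hA2.mul_right hcop
      obtain ⟨TR, hTR⟩ := exists_int_gt (max ((1 : ℝ) - u) (π / (b * ζ) - u) / (2 * b))
      set K : ℤ := u + 2 * b * TR with hKdef
      have h2b : (0:ℝ) < 2 * (b:ℝ) := by linarith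
      have hKgt : (K : ℝ) > max ((1 : ℝ) - u) (π / (b * ζ) - u) + u := by
        have := (div_lt_iff₀ h2b).mp hTR
        push_cast [hKdef]
        nlinarith
      have hK1 : 1 ≤ K := by
        have h1 := le_max_left ((1 : ℝ) - u) (π / (b * ζ) - u)
        have : (1 : ℝ) < K := by linarith
        exact (by exact_mod_cast this : (1:ℤ) < K).le
      have hKR : π / ((b:ℝ) * ζ) ≤ (K : ℝ) := by
        have := le_max_right ((1 : ℝ) - u) (π / (b * ζ) - u)
        linarith
      have hKodd : Odd K := by
        refine ⟨b * TR - u * c - w * b, ?_⟩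
        have h1 : u * (2 * c + 1) + w * (2 * b) = 1 := by rw [← hc]; exact huw
        linarith [h1]
      have hKa : K * a = 1 + 2 * b * (a * TR - w) := by
        have hua : u * a = 1 - 2 * w * b := by linarith [huw]
        calc K * a = u * a + 2 * b * TR * a := by rw [hKdef]; ring
          _ = 1 + 2 * b * (a * TR - w) := by rw [hua]; ring
      have hKt : 0 < K.toNat := by omega
      refine ⟨K.toNat, a * TR - w, ?_, hKt, ?_⟩
      · rcases hKodd with ⟨j, hj⟩
        exact ⟨j.toNat, by omega⟩
      · have hkK : ((K.toNat : ℕ) : ℝ) = (K : ℝ) := by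
          exact_mod_cast Int.toNat_of_nonneg (by omega : (0:ℤ) ≤ K)
        rw [hkK]
        set M : ℤ := a * TR - w with hMdef
        have hexp : (K : ℝ) * ((q : ℝ) * π) = π / b + 2 * π * M := by
          have hKaR : (K : ℝ) * (a : ℝ) = 1 + 2 * (b:ℝ) * (M : ℝ) := by exact_mod_cast hKa
          rw [hcast]
          field_simp
          nlinarith [hKaR]
        rw [hexp]
        have habs : |2 * π * (M:ℝ) - (π / b + 2 * π * M)| = π / b := by
          rw [show 2 * π * (M:ℝ) - (π / b + 2 * π * M) = -(π/b) by ring, abs_neg,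
            abs_of_pos (by positivity)]
        rw [habs, div_le_iff₀ hbR]
        have := (div_le_iff₀ (by positivity : (0:ℝ) < (b:ℝ) * ζ)).mp hKR
        nlinarith
  · push_neg at hrat
    have h2irr : ∀ q : ℚ, 2 * α ≠ q * π := by
      intro q h
      refine hrat (q / 2) ?_
      push_cast
      linarith
    obtain ⟨S, T, hST⟩ := dense_helper h2irr (-α) ζ hζ
    have hST' : |(2 * S + 1 : ℤ) * α + 2 * π * T| < ζ := by
      push_cast
      rw [show ((2:ℝ) * S + 1) * α + 2 * π * T = S * (2 * α) + 2 * π * T - -α by ring]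
      exact hST
    set K : ℤ := 2 * S + 1 with hKdef
    rcases lt_trichotomy K 0 with hK | hK | hK
    · have hKt : 0 < (-K).toNat := by omega
      refine ⟨(-K).toNat, T, ⟨(-S-1).toNat, by omega⟩, hKt, ?_⟩
      have h1 : (((-K).toNat : ℕ) : ℝ) = -(K : ℝ) := by
        have : (((-K).toNat : ℕ) : ℤ) = -K := Int.toNat_of_nonneg (by omega)
        exact_mod_cast this
      rw [h1]
      have hk1 : (1:ℝ) ≤ -(K:ℝ) := by
        have : (1:ℤ) ≤ -K := by omega
        exact_mod_cast this
      rw [show 2 * π * (T:ℝ) - -(K:ℝ) * α = (K:ℝ) * α + 2 * π * T by ring]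
      have h2 := hST'
      push_cast at h2
      nlinarith [abs_nonneg ((K:ℝ) * α + 2 * π * (T:ℝ))]
    · omega
    · have hKt : 0 < K.toNat := by omega
      refine ⟨K.toNat, -T, ⟨S.toNat, by omega⟩, hKt, ?_⟩
      have h1 : ((K.toNat : ℕ) : ℝ) = (K : ℝ) := by
        exact_mod_cast Int.toNat_of_nonneg (by omega : (0:ℤ) ≤ K)
      rw [h1]
      have hk1 : (1:ℝ) ≤ (K:ℝ) := by
        have : (1:ℤ) ≤ K := by omega
        exact_mod_cast this
      rw [show 2 * π * ((-T : ℤ):ℝ) - (K:ℝ) * α = -((K:ℝ) * α + 2 * π * T) by push_cast; ring,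
        abs_neg]
      have h2 := hST'
      push_cast at h2
      nlinarith [abs_nonneg ((K:ℝ) * α + 2 * π * (T:ℝ))]





lemma band_of_int {α : ℝ} (hα0 : 0 < α) (S o : ℤ) (hS : 0 < S) (ho : Odd o)
    (h : |S * α - o * π| < π / 3) :
    ∃ s r : ℕ, 0 < s ∧ |α - (2 * r + 1) * π / s| < π / (3 * s) := by
  have hπ := pi_pos
  have habs := abs_lt.mp h
  have hSR : (0:ℝ) < (S:ℝ) := by exact_mod_cast hS
  have ho1 : 1 ≤ o := by
    by_contra hcon
    push_neg at hcon
    have ho0 : o ≤ -1 := by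
      rcases ho with ⟨j, hj⟩
      omega
    have : (o:ℝ) ≤ -1 := by exact_mod_cast ho0
    have hSα : 0 < (S:ℝ) * α := by positivity
    nlinarith
  obtain ⟨j, hj⟩ := ho
  have hj0 : 0 ≤ j := by omega
  refine ⟨S.toNat, j.toNat, by omega, ?_⟩
  have hsR : ((S.toNat : ℕ) : ℝ) = (S : ℝ) := by
    exact_mod_cast Int.toNat_of_nonneg hS.le
  have hrR : ((j.toNat : ℕ) : ℝ) = (j : ℝ) := by
    exact_mod_cast Int.toNat_of_nonneg hj0
  rw [hsR, hrR]
  have hoR : (2 * (j:ℝ) + 1) = (o : ℝ) := by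
    push_cast [hj]
    ring
  rw [hoR]
  have key : |α - (o:ℝ) * π / S| = |(S:ℝ) * α - o * π| / S := by
    have h0 : α - (o:ℝ) * π / S = ((S:ℝ) * α - o * π) / S := by field_simp
    rw [h0, abs_div, abs_of_pos hSR]
  rw [key, div_lt_iff₀ hSR]
  have h1 : π / (3 * (S:ℝ)) * S = π / 3 := by field_simp
  rw [h1]
  exact h

lemma exists_band (α : ℝ) (hα0 : 0 < α) (hαπ : α ≤ π) (hne : α ≠ 2 * π / 3) :
    ∃ s r : ℕ, 0 < s ∧ |α - (2 * r + 1) * π / s| < π / (3 * s) := by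
  have hπ := pi_pos
  by_cases hrat : ∃ q : ℚ, α = q * π
  · obtain ⟨q, rfl⟩ := hrat
    have hq0 : 0 < q := by
      by_contra h
      push_neg at h
      have : (q : ℝ) ≤ 0 := by exact_mod_cast h
      nlinarith
    have hq1 : (q:ℝ) ≤ 1 := by nlinarith
    set a : ℤ := q.num with hadef
    set b : ℤ := (q.den : ℤ) with hbdef
    have ha0 : 0 < a := Rat.num_pos.mpr hq0
    have hb0 : (0:ℤ) < b := by rw [hbdef]; exact_mod_cast q.pos
    have hbR : (0:ℝ) < (b:ℝ) := by exact_mod_cast hb0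
    have hcast : (q : ℝ) = (a : ℝ) / (b : ℝ) := by
      rw [Rat.cast_def, hadef, hbdef]
      norm_cast
    have hab : a ≤ b := by
      have : (a:ℝ) ≤ (b:ℝ) := by
        rw [hcast] at hq1
        nlinarith [(div_le_one hbR).mp hq1]
      exact_mod_cast this
    rcases Int.even_or_odd a with ha | ha
    · -- a even
      obtain ⟨a₀, ha₀⟩ := ha
      have hcop : IsCoprime a b := by
        rw [Int.isCoprime_iff_gcd_eq_one]
        exact_mod_cast q.reduced
      have hbodd : Odd b := by
        rcases Int.even_or_odd b with hb | hb
        · exfalso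
          obtain ⟨b₀, hb₀⟩ := hb
          have h2 : (2 : ℕ) ∣ q.num.natAbs.gcd q.den := by
            refine Nat.dvd_gcd ?_ ?_
            · have h2a : (2:ℤ) ∣ q.num := ⟨a₀, by omega⟩
              simpa using Int.natAbs_dvd_natAbs.mpr h2a
            · have h2b : (2:ℤ) ∣ b := ⟨b₀, by omega⟩
              rw [hbdef] at h2b
              exact_mod_cast h2b
          rw [q.reduced] at h2
          omega
        · exact hb
      have ha2 : 2 ≤ a := by omega
      have hb1 : b ≠ 1 := by
        intro h
        rw [h] at hab
        omega
      have hb3 : b ≠ 3 := by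
        intro h
        apply hne
        have haa : a = 2 := by omega
        rw [hcast, haa, h]
        push_cast
        ring
      have hb5 : 5 ≤ b := by
        rcases hbodd with ⟨j, hj⟩
        omega
      obtain ⟨u, w, huw⟩ := hcop
      -- (2u) a₀ + w b = 1
      have huw' : (2 * u) * a₀ + w * b = 1 := by
        rw [ha₀] at huw
        linarith [huw]
      obtain ⟨b₁, hb₁⟩ := hbodd
      set hh : ℤ := b₁ + 1 with hhdef
      have h2h : 2 * hh = b + 1 := by omega
      set s₀ : ℤ := 2 * u * hh with hs₀def
      set w₀ : ℤ := w * hh with hw₀def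
      have hE : a * s₀ = b * (1 - 2 * w₀) + 1 := by
        rw [ha₀, hs₀def, hw₀def]
        linear_combination (2 * hh) * huw' + h2h
      -- choose shift T so that s₁ ≥ 1
      obtain ⟨T, hT1⟩ : ∃ T : ℤ, 1 ≤ s₀ + b * T := by
        rcases le_or_gt 1 s₀ with h | h
        · exact ⟨0, by omega⟩
        · refine ⟨1 - s₀, ?_⟩
          nlinarith
      set s₁ : ℤ := s₀ + b * T with hs₁def
      set o₁ : ℤ := (1 - 2 * w₀) + 2 * a₀ * T with ho₁def
      have hE1 : a * s₁ = b * o₁ + 1 := by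
        rw [hs₁def, ho₁def, mul_add, hE, ha₀]
        ring
      have ho₁odd : Odd o₁ := ⟨a₀ * T - w₀, by rw [ho₁def]; ring⟩
      have ho₁1 : 1 ≤ o₁ := by
        by_contra hcon
        push_neg at hcon
        have h1 : b * o₁ ≤ 0 := by nlinarith
        have h2 : 2 ≤ a * s₁ := by nlinarith
        omega
      -- |α - o₁ π / s₁| = π/(b s₁) < π/(3 s₁)
      have hs₁R : (0:ℝ) < (s₁:ℝ) := by exact_mod_cast by omega
      obtain ⟨j, hj⟩ := ho₁odd
      have hj0 : 0 ≤ j := by omega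
      refine ⟨s₁.toNat, j.toNat, by omega, ?_⟩
      have hsR : ((s₁.toNat : ℕ) : ℝ) = (s₁ : ℝ) := by
        exact_mod_cast Int.toNat_of_nonneg (by omega : (0:ℤ) ≤ s₁)
      have hrR : ((j.toNat : ℕ) : ℝ) = (j : ℝ) := by
        exact_mod_cast Int.toNat_of_nonneg hj0
      rw [hsR, hrR]
      have hoR : (2 * (j:ℝ) + 1) = (o₁ : ℝ) := by
        push_cast [hj]
        ring
      rw [hoR]
      have hE1R : (a:ℝ) * s₁ = (b:ℝ) * o₁ + 1 := by exact_mod_cast hE1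
      have hval0 : (q:ℝ) * π - (o₁:ℝ) * π / s₁ = π / ((b:ℝ) * s₁) := by
        rw [hcast]
        field_simp
        linear_combination hE1R
      rw [hval0, abs_of_pos (by positivity)]
      rw [div_lt_div_iff₀ (by positivity) (by positivity)]
      have hbR5 : (5:ℝ) ≤ (b:ℝ) := by exact_mod_cast hb5
      nlinarith [mul_pos hπ hs₁R]
    · -- a odd : exact representation
      obtain ⟨c, hc⟩ := ha
      refine band_of_int (by positivity) b a hb0 ⟨c, hc⟩ ?_
      have : (b:ℝ) * ((q:ℝ) * π) - (a:ℝ) * π = 0 := by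
        rw [hcast]
        field_simp
        ring
      rw [this, abs_zero]
      positivity
  · push_neg at hrat
    obtain ⟨S, T, hST⟩ := dense_helper hrat π (π / 3) (by positivity)
    have hS0 : S ≠ 0 := by
      intro h
      rw [h] at hST
      push_cast at hST
      rw [show (0:ℝ) * α + 2 * π * T - π = ((2 * T - 1 : ℤ) : ℝ) * π by push_cast; ring] at hST
      rw [abs_mul, abs_of_pos hπ] at hST
      have h1 : (1:ℝ) ≤ |((2 * T - 1 : ℤ) : ℝ)| := by
        have : (1:ℤ) ≤ |2 * T - 1| := Int.one_le_abs (by omega)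
        exact_mod_cast this
      nlinarith
    rcases hS0.lt_or_gt with hS | hS
    · refine band_of_int hα0 (-S) (2 * T - 1) (by omega) ⟨T - 1, by ring⟩ ?_
      rw [show ((-S : ℤ):ℝ) * α - ((2 * T - 1 : ℤ):ℝ) * π
          = -((S:ℝ) * α + 2 * π * T - π) by push_cast; ring, abs_neg]
      exact hST
    · refine band_of_int hα0 S (1 - 2 * T) (by omega) ⟨-T, by ring⟩ ?_
      rw [show ((S : ℤ):ℝ) * α - ((1 - 2 * T : ℤ):ℝ) * π
          = (S:ℝ) * α + 2 * π * T - π by push_cast; ring]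
      exact hST




open Metric
open scoped ENNReal

lemma two_pi_ofReal_ne_zero : ENNReal.ofReal (2 * π) ≠ 0 :=
  (ENNReal.ofReal_pos.mpr (by positivity)).ne'

instance : IsProbabilityMeasure circleUniform := by
  constructor
  rw [circleUniform, Measure.smul_apply, smul_eq_mul,
    AddCircle.measure_univ (T := 2 * π), ENNReal.inv_mul_cancel two_pi_ofReal_ne_zero
    ENNReal.ofReal_ne_top]

lemma circleUniform_closedBall_compl (c : Circle2) {ρ : ℝ} (hρ0 : 0 < ρ) (hρ : ρ ≤ π) :
    circleUniform (closedBall c ρ)ᶜ = ENNReal.ofReal (1 - ρ / π) := by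
  have hπ := pi_pos
  have hball : circleUniform (closedBall c ρ) = ENNReal.ofReal (ρ / π) := by
    rw [circleUniform, Measure.smul_apply, smul_eq_mul,
      AddCircle.volume_closedBall (T := 2 * π), min_eq_right (by linarith)]
    rw [← ENNReal.div_eq_inv_mul, ← ENNReal.ofReal_div_of_pos (by positivity)]
    congr 1
    field_simp
  rw [prob_compl_eq_one_sub measurableSet_closedBall, hball,
    ← ENNReal.ofReal_one, ← ENNReal.ofReal_sub _ (by positivity)]

/-- Centers of the covering balls. -/
noncomputable def cc (δ : ℝ) (j : ℕ) : Circle2 := ((j * (δ / 2) : ℝ) : Circle2)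

lemma cover {δ : ℝ} (hδ0 : 0 < δ) (hδ2 : δ ≤ 2 * π) (y : Circle2) :
    ∃ j < ⌈4 * π / δ⌉₊, dist (cc δ j) y ≤ δ / 2 := by
  have hπ := pi_pos
  obtain ⟨u, hu, huy⟩ := AddCircle.eq_coe_Ico y
  set j : ℕ := ⌊u / (δ / 2)⌋₊ with hjdef
  have hu0 : 0 ≤ u := hu.1
  have hu2 : u < 2 * π := hu.2
  have hδ20 : 0 < δ / 2 := by linarith
  have hjle : (j : ℝ) * (δ / 2) ≤ u := by
    rw [hjdef]
    have := Nat.floor_le (by positivity : 0 ≤ u / (δ / 2))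
    calc (⌊u / (δ / 2)⌋₊ : ℝ) * (δ / 2) ≤ u / (δ / 2) * (δ / 2) := by nlinarith
      _ = u := by field_simp
  have hjlt : u < ((j : ℝ) + 1) * (δ / 2) := by
    have := Nat.lt_floor_add_one (u / (δ / 2))
    calc u = u / (δ / 2) * (δ / 2) := by field_simp
      _ < ((j:ℝ) + 1) * (δ / 2) := by
          push_cast [hjdef]
          nlinarith
  refine ⟨j, ?_, ?_⟩
  · rw [hjdef, Nat.floor_lt (by positivity)]
    calc u / (δ / 2) < 2 * π / (δ / 2) := by gcongr
      _ = 4 * π / δ := by field_simp; ring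
      _ ≤ (⌈4 * π / δ⌉₊ : ℝ) := Nat.le_ceil _
  · have hw0 : 0 ≤ u - (j:ℝ) * (δ / 2) := by linarith
    have hwlt : u - (j:ℝ) * (δ / 2) ≤ δ / 2 := by linarith
    have hcoe : dist (cc δ j) y = ‖((u - (j:ℝ) * (δ / 2) : ℝ) : Circle2)‖ := by
      rw [← huy, cc, dist_eq_norm, ← AddCircle.coe_sub]
      rw [show ((j:ℝ) * (δ/2) - u) = -(u - (j:ℝ) * (δ/2)) by ring, AddCircle.coe_neg, norm_neg]
    rw [hcoe, norm_circle_eq hw0 (by linarith)]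
    exact le_trans (min_le_left _ _) hwlt

lemma net_prob_bound (n : ℕ) {δ : ℝ} (hδ0 : 0 < δ) (hδ2 : δ ≤ 2 * π) :
    ∃ A : Set (Fin n → Circle2), MeasurableSet A ∧ (∀ x ∈ A, cIsNet δ (Set.range x)) ∧
      (Measure.pi fun _ : Fin n => circleUniform) Aᶜ ≤
        (⌈4 * π / δ⌉₊ : ℝ≥0∞) * ENNReal.ofReal (Real.exp (-((n:ℝ) * δ) / (2 * π))) := by
  have hπ := pi_pos
  set M := ⌈4 * π / δ⌉₊ with hMdef
  set B : ℕ → Set Circle2 := fun j => closedBall (cc δ j) (δ / 2) with hBdef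
  set E : ℕ → Set (Fin n → Circle2) := fun j => {x | ∃ i, x i ∈ B j} with hEdef
  have hEmeas : ∀ j, MeasurableSet (E j) := by
    intro j
    have : E j = ⋃ i, (fun x : Fin n → Circle2 => x i) ⁻¹' B j := by
      ext x; simp [hEdef]
    rw [this]
    exact MeasurableSet.iUnion fun i => (measurable_pi_apply i) measurableSet_closedBall
  refine ⟨(⋂ j ∈ Finset.range M, E j), ?_, ?_, ?_⟩
  · exact MeasurableSet.biInter (Finset.range M).countable_toSet fun j _ => hEmeas j
  · intro x hx y
    obtain ⟨j, hjM, hjy⟩ := cover hδ0 hδ2 y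
    have hxj : x ∈ E j := by
      have := Set.mem_iInter₂.mp hx j (Finset.mem_range.mpr hjM)
      exact this
    obtain ⟨i, hi⟩ := hxj
    refine ⟨x i, Set.mem_range_self i, ?_⟩
    calc dist (x i) y ≤ dist (x i) (cc δ j) + dist (cc δ j) y := dist_triangle _ _ _
      _ ≤ δ / 2 + δ / 2 := add_le_add (mem_closedBall.mp hi) hjy
      _ = δ := by ring
  · have hcompl : (⋂ j ∈ Finset.range M, E j)ᶜ = ⋃ j ∈ Finset.range M, (E j)ᶜ := by
      simp [Set.compl_iInter]
    rw [hcompl]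
    calc (Measure.pi fun _ : Fin n => circleUniform) (⋃ j ∈ Finset.range M, (E j)ᶜ)
        ≤ ∑ j ∈ Finset.range M,
            (Measure.pi fun _ : Fin n => circleUniform) (E j)ᶜ :=
          measure_biUnion_finset_le _ _
      _ ≤ ∑ _j ∈ Finset.range M, ENNReal.ofReal (Real.exp (-((n:ℝ) * δ) / (2 * π))) := by
          refine Finset.sum_le_sum fun j _ => ?_
          have hEc : (E j)ᶜ = Set.pi Set.univ (fun _ : Fin n => (B j)ᶜ) := by
            ext x
            simp [hEdef, Set.mem_pi]
          rw [hEc, Measure.pi_pi]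
          have hBc : circleUniform (B j)ᶜ = ENNReal.ofReal (1 - δ / (2 * π)) := by
            rw [hBdef]
            rw [circleUniform_closedBall_compl (cc δ j) (by linarith) (by linarith)]
            congr 1
            field_simp
          rw [Finset.prod_const, hBc]
          rw [Finset.card_univ, Fintype.card_fin]
          rw [← ENNReal.ofReal_pow (by
            have : δ / (2 * π) ≤ 1 := by
              rw [div_le_one (by positivity)]; linarith
            linarith)]
          apply ENNReal.ofReal_le_ofReal
          have h1 : 1 - δ / (2 * π) ≤ Real.exp (-(δ / (2 * π))) := by
            have := Real.add_one_le_exp (-(δ / (2 * π)))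
            linarith
          calc (1 - δ / (2 * π)) ^ n ≤ Real.exp (-(δ / (2 * π))) ^ n := by
                apply pow_le_pow_left₀ ?_ h1
                have : δ / (2 * π) ≤ 1 := by
                  rw [div_le_one (by positivity)]; linarith
                linarith
            _ = Real.exp (-((n:ℝ) * δ) / (2 * π)) := by
                rw [← Real.exp_nat_mul]
                congr 1
                field_simp
      _ = (M : ℝ≥0∞) * ENNReal.ofReal (Real.exp (-((n:ℝ) * δ) / (2 * π))) := by
          rw [Finset.sum_const, Finset.card_range, nsmul_eq_mul]


end SG18

/-- there is a constant `C₁ > 0` such that for all `0 < α ≤ π`, `α ≠ 2π/3`,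
if `ε_n ≥ C₁ log n / n` eventually and `ε_n → 0`, then the random ε_n-distance graph with
parameter `α` on `n` i.i.d. uniform points of `S¹` has chromatic number exactly `3` a.a.s. -/
theorem stmt_18 :
    ∃ C : ℝ, 0 < C ∧ ∀ α : ℝ, 0 < α → α ≤ Real.pi → α ≠ 2 * Real.pi / 3 →
      ∀ ε : ℕ → ℝ, (∀ n, 0 < ε n) →
      (∀ᶠ n : ℕ in Filter.atTop, C * (Real.log n / n) ≤ ε n) →
      Filter.Tendsto ε Filter.atTop (nhds 0) →
      Filter.Tendsto
        (fun n => (Measure.pi fun _ : Fin n => circleUniform)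
          {x : Fin n → Circle2 |
            (cDistGraph (Set.range x) α (ε n)).chromaticNumber = 3})
        Filter.atTop (nhds 1) := by
  classical
  refine ⟨64 * Real.pi, by positivity, ?_⟩
  intro α hα0 hαπ hαne ε hε0 hεlog hεlim
  have hπ := Real.pi_pos
  obtain ⟨s, r, hs, hband⟩ := SG18.exists_band α hα0 hαπ hαne
  set gap : ℝ := π / (3 * s) - |α - (2 * r + 1) * π / s| with hgapdef
  have hgap0 : 0 < gap := by rw [hgapdef]; linarith [hband]
  -- the probability bound sequence
  set b : ℕ → ℝ≥0∞ := fun n => (⌈4 * π / (ε n / 8)⌉₊ : ℝ≥0∞) *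
    ENNReal.ofReal (Real.exp (-((n:ℝ) * (ε n / 8)) / (2 * π))) with hbdef
  set P : ℕ → ℝ≥0∞ := fun n => (Measure.pi fun _ : Fin n => circleUniform)
    {x : Fin n → Circle2 | (cDistGraph (Set.range x) α (ε n)).chromaticNumber = 3} with hPdef
  -- eventual smallness facts
  have hevgap : ∀ᶠ n in atTop, ε n < gap := hεlim.eventually (gt_mem_nhds hgap0)
  have hevα : ∀ᶠ n in atTop, ε n < α := hεlim.eventually (gt_mem_nhds hα0)
  have hevlog : ∀ᶠ n : ℕ in atTop, 1 ≤ Real.log n := by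
    filter_upwards [eventually_ge_atTop 3] with n hn
    have h3 : (3:ℝ) ≤ (n:ℝ) := by exact_mod_cast hn
    have he : Real.exp 1 ≤ (n:ℝ) := by
      have := Real.exp_one_lt_d9
      linarith
    rwa [Real.le_log_iff_exp_le (by linarith)]
  -- Step A : eventually 1 - b n ≤ P n
  have hstepA : ∀ᶠ n in atTop, (1:ℝ≥0∞) - b n ≤ P n := by
    filter_upwards [hevgap, hevα, eventually_ge_atTop 1] with n hgapn hαn hn1
    have hεn := hε0 n
    obtain ⟨A, hAmeas, hAnet, hAbound⟩ := SG18.net_prob_bound n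
      (show 0 < ε n / 8 by linarith) (by linarith)
    have hsub : A ⊆ {x : Fin n → Circle2 |
        (cDistGraph (Set.range x) α (ε n)).chromaticNumber = 3} := by
      intro x hx
      have hnet := hAnet x hx
      -- upper bound
      have hle : (cDistGraph (Set.range x) α (ε n)).chromaticNumber ≤ 3 := by
        have hcol : (cDistGraph (Set.range x) α (ε n)).Colorable 3 :=
          SG18.upper_bound hs hεn.le (by rw [hgapdef] at hgapn; linarith) (Set.range x)
        have := hcol.chromaticNumber_le
        simpa using this
      -- lower bound
      obtain ⟨k, m, hkodd, hk0, happrox⟩ := SG18.exists_odd_approx α hα0 hαπ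
        (show 0 < ε n / 2 by linarith)
      have happrox' : |2 * π * m - k * α| ≤ k * (ε n - 2 * (ε n / 8)) := by
        refine le_trans happrox ?_
        have hk0R : (0:ℝ) ≤ k := by positivity
        nlinarith
      have hge : 3 ≤ (cDistGraph (Set.range x) α (ε n)).chromaticNumber :=
        SG18.lower_bound hα0 hαπ hεn hαn (by linarith) hkodd hk0 happrox' x hnet
      exact le_antisymm hle hge
    have hμA : (Measure.pi fun _ : Fin n => circleUniform) A =
        1 - (Measure.pi fun _ : Fin n => circleUniform) Aᶜ := by
      rw [← prob_compl_eq_one_sub hAmeas.compl, compl_compl]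
    calc (1:ℝ≥0∞) - b n ≤ 1 - (Measure.pi fun _ : Fin n => circleUniform) Aᶜ :=
          tsub_le_tsub_left hAbound 1
      _ = (Measure.pi fun _ : Fin n => circleUniform) A := hμA.symm
      _ ≤ P n := measure_mono hsub
  -- Step B : b n → 0
  have hstepB : Tendsto b atTop (nhds 0) := by
    set rr : ℕ → ℝ := fun n => (n:ℝ) * Real.exp (-(4 * Real.log n)) with hrrdef
    have hbound : ∀ᶠ n in atTop, b n ≤ ENNReal.ofReal (rr n) := by
      filter_upwards [hεlog, hevlog, eventually_ge_atTop 1, hevα] with n hlogn hlog1 hn1 hαn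
      have hεn := hε0 n
      have hnR : (1:ℝ) ≤ (n:ℝ) := by exact_mod_cast hn1
      have hnε : 64 * π * Real.log n ≤ (n:ℝ) * ε n := by
        have h0 : (0:ℝ) < (n:ℝ) := by linarith
        have h1 := mul_le_mul_of_nonneg_right hlogn h0.le
        have h2 : 64 * π * (Real.log n / n) * n = 64 * π * Real.log n := by field_simp
        nlinarith [h1, h2]
      have hM : (⌈4 * π / (ε n / 8)⌉₊ : ℝ≥0∞) ≤ ENNReal.ofReal (n:ℝ) := by
        rw [← ENNReal.ofReal_natCast]
        apply ENNReal.ofReal_le_ofReal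
        have hceil : (⌈4 * π / (ε n / 8)⌉₊ : ℕ) ≤ n := by
          rw [Nat.ceil_le]
          rw [div_le_iff₀ (by linarith : (0:ℝ) < ε n / 8)]
          nlinarith
        exact_mod_cast hceil
      have hexp : ENNReal.ofReal (Real.exp (-((n:ℝ) * (ε n / 8)) / (2 * π))) ≤
          ENNReal.ofReal (Real.exp (-(4 * Real.log n))) := by
        apply ENNReal.ofReal_le_ofReal
        apply Real.exp_le_exp.mpr
        rw [div_le_iff₀ (by positivity : (0:ℝ) < 2 * π)]
        nlinarith
      calc b n ≤ ENNReal.ofReal (n:ℝ) * ENNReal.ofReal (Real.exp (-(4 * Real.log n))) :=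
            mul_le_mul' hM hexp
        _ = ENNReal.ofReal (rr n) := by
            rw [← ENNReal.ofReal_mul (by positivity)]
    have hrr0 : Tendsto rr atTop (nhds 0) := by
      apply squeeze_zero' (Eventually.of_forall fun n => by positivity)
        (g := fun n : ℕ => 1 / (n:ℝ)) ?_ tendsto_one_div_atTop_nhds_zero_nat
      filter_upwards [eventually_ge_atTop 1] with n hn1
      have hnR : (1:ℝ) ≤ (n:ℝ) := by exact_mod_cast hn1
      have hn0 : (0:ℝ) < (n:ℝ) := by linarith
      have hexp4 : Real.exp (-(4 * Real.log n)) = (((n:ℝ))^(4:ℕ))⁻¹ := by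
        rw [show (4:ℝ) * Real.log n = ((4:ℕ):ℝ) * Real.log n by norm_num,
          Real.exp_neg, Real.exp_nat_mul, Real.exp_log hn0]
      rw [hrrdef]
      simp only []
      rw [hexp4]
      rw [show (n:ℝ) * (((n:ℝ))^(4:ℕ))⁻¹ = 1 / ((n:ℝ))^(3:ℕ) by field_simp]
      apply one_div_le_one_div_of_le hn0
      nlinarith [mul_le_mul hnR hnR (by linarith : (0:ℝ) ≤ 1) (by linarith : (0:ℝ) ≤ (n:ℝ))]
    have hofReal : Tendsto (fun n => ENNReal.ofReal (rr n)) atTop (nhds 0) := by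
      have := (ENNReal.continuous_ofReal.tendsto 0).comp hrr0
      simpa [Function.comp_def] using this
    exact tendsto_of_tendsto_of_tendsto_of_le_of_le' tendsto_const_nhds hofReal
      (Eventually.of_forall fun n => (zero_le : 0 ≤ b n)) hbound
  -- Step C : conclude
  have hlow : Tendsto (fun n => (1:ℝ≥0∞) - b n) atTop (nhds 1) := by
    have := ENNReal.Tendsto.sub (tendsto_const_nhds (x := (1:ℝ≥0∞))) hstepB
      (Or.inl ENNReal.one_ne_top)
    simpa using this
  refine tendsto_of_tendsto_of_tendsto_of_le_of_le' hlow tendsto_const_nhds hstepA ?_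
  exact Eventually.of_forall fun n => prob_le_one
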